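/- Let p be a prime and let E = {e_1 < e_2 < e_3 < ...} be an infinite increasing set of positive natural numbers. Let N(p,E) be the set of natural numbers n that are divisible by p and whose exponent of p in the canonical (prime) factorization lies in E, i.e. N(p,E) = {n ∈ ℕ : v_p(n) ∈ E}. Then N(p,E) is Buck measurable and μ(N(p,E)) = (1 - 1/p) Σ_{n=1}^∞ 1/p^{e_n}. -/

import Mathlib

open scoped BigOperators

/-- Buck's measure density: the infimum of `∑ 1/mᵢ` over finite covers of `S`
by arithmetic progressions `{n | n ≡ rᵢ [MOD mᵢ]}`. -/
noncomputable def buckDensity (S : Set ℕ) : ℝ :=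
  sInf {x : ℝ | ∃ (k : ℕ) (r m : Fin k → ℕ), (∀ i, 0 < m i) ∧
    (S ⊆ ⋃ i, {n : ℕ | n ≡ r i [MOD m i]}) ∧ x = ∑ i, (1 : ℝ) / (m i)}

/-- A set is Buck measurable if `μ*(S) + μ*(ℕ \ S) = 1`. -/
def BuckMeasurable (S : Set ℕ) : Prop :=
  buckDensity S + buckDensity Sᶜ = 1

/-- `R(S : m)`: the number of residue classes modulo `m` occupied by `S`. -/
noncomputable def residueCount (S : Set ℕ) (m : ℕ) : ℕ :=
  ((fun s => s % m) '' S).ncard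


lemma count_modeq (m r : ℕ) (hm : 0 < m) (t : ℕ) :
    ((Finset.range (m * t)).filter (fun n => n % m = r % m)).card = t := by
  have key : ((Finset.range (m * t)).filter (fun n => n % m = r % m)).card
      = (Finset.range t).card := by
    apply Finset.card_bij' (fun a _ => a / m) (fun b _ => r % m + m * b)
    · intro a ha
      obtain ⟨ha1, ha2⟩ := Finset.mem_filter.1 ha
      rw [Finset.mem_range] at ha1 ⊢
      exact Nat.div_lt_of_lt_mul (by omega)
    · intro b hb
      rw [Finset.mem_range] at hb
      refine Finset.mem_filter.2 ⟨Finset.mem_range.2 ?_, ?_⟩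
      · have := Nat.mod_lt r hm
        calc r % m + m * b < m + m * b := by omega
        _ = m * (b + 1) := by ring
        _ ≤ m * t := Nat.mul_le_mul_left m (by omega)
      · rw [Nat.add_mul_mod_self_left]
        exact Nat.mod_mod_of_dvd r dvd_rfl
    · intro a ha
      obtain ⟨_, ha2⟩ := Finset.mem_filter.1 ha
      conv_rhs => rw [← Nat.div_add_mod a m]
      omega
    · intro b hb
      rw [Nat.add_mul_div_left _ _ hm, Nat.div_eq_of_lt (Nat.mod_lt r hm)]
      omega
  rw [key, Finset.card_range]

lemma one_le_cover_sum {k : ℕ} (r m : Fin k → ℕ) (hm : ∀ i, 0 < m i)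
    (hcov : ∀ n : ℕ, ∃ i, n ≡ r i [MOD m i]) :
    (1 : ℝ) ≤ ∑ i, (1 : ℝ) / (m i) := by
  classical
  set M := ∏ i, m i with hM
  have hMpos : 0 < M := Finset.prod_pos (fun i _ => hm i)
  have hdvd : ∀ i, m i ∣ M := fun i => Finset.dvd_prod_of_mem _ (Finset.mem_univ i)
  have hcard : M ≤ ∑ i, M / m i := by
    calc M = (Finset.range M).card := (Finset.card_range M).symm
    _ ≤ (Finset.univ.biUnion (fun i =>
          (Finset.range M).filter (fun n => n % m i = r i % m i))).card := by
        apply Finset.card_le_card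
        intro n hn
        obtain ⟨i, hi⟩ := hcov n
        exact Finset.mem_biUnion.2 ⟨i, Finset.mem_univ i, Finset.mem_filter.2 ⟨hn, hi⟩⟩
    _ ≤ ∑ i, ((Finset.range M).filter (fun n => n % m i = r i % m i)).card :=
        Finset.card_biUnion_le
    _ = ∑ i, M / m i := by
        refine Finset.sum_congr rfl fun i _ => ?_
        have := count_modeq (m i) (r i) (hm i) (M / m i)
        rwa [Nat.mul_div_cancel' (hdvd i)] at this
  have hreal : (M : ℝ) ≤ ∑ i, (M : ℝ) / (m i) := by
    calc (M : ℝ) ≤ ((∑ i, M / m i : ℕ) : ℝ) := by exact_mod_cast hcard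
    _ = ∑ i, (M : ℝ) / (m i) := by
        rw [Nat.cast_sum]
        exact Finset.sum_congr rfl fun i _ => Nat.cast_div (hdvd i)
          (by exact_mod_cast (hm i).ne')
  have hM' : (0 : ℝ) < M := by exact_mod_cast hMpos
  have : (M : ℝ) * 1 ≤ (M : ℝ) * ∑ i, (1 : ℝ) / (m i) := by
    rw [mul_one, Finset.mul_sum]
    simpa [mul_one_div, div_eq_mul_inv] using hreal
  exact le_of_mul_le_mul_left this hM'

lemma buck_bddBelow (S : Set ℕ) :
    BddBelow {x : ℝ | ∃ (k : ℕ) (r m : Fin k → ℕ), (∀ i, 0 < m i) ∧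
    (S ⊆ ⋃ i, {n : ℕ | n ≡ r i [MOD m i]}) ∧ x = ∑ i, (1 : ℝ) / (m i)} := by
  refine ⟨0, ?_⟩
  rintro x ⟨k, r, m, hm, _, rfl⟩
  exact Finset.sum_nonneg fun i _ => by positivity

lemma buck_nonempty (S : Set ℕ) :
    Set.Nonempty {x : ℝ | ∃ (k : ℕ) (r m : Fin k → ℕ), (∀ i, 0 < m i) ∧
    (S ⊆ ⋃ i, {n : ℕ | n ≡ r i [MOD m i]}) ∧ x = ∑ i, (1 : ℝ) / (m i)} := by
  refine ⟨1, 1, 0, 1, fun i => one_pos, ?_, by simp⟩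
  intro n _
  exact Set.mem_iUnion.2 ⟨0, Nat.modEq_one⟩

lemma buckDensity_le {S : Set ℕ} {ι : Type*} (T : Finset ι) (r m : ι → ℕ)
    (hm : ∀ i ∈ T, 0 < m i)
    (hcov : S ⊆ ⋃ i ∈ T, {n : ℕ | n ≡ r i [MOD m i]}) :
    buckDensity S ≤ ∑ i ∈ T, (1 : ℝ) / (m i) := by
  classical
  apply csInf_le (buck_bddBelow S)
  refine ⟨T.card, fun i => r (T.equivFin.symm i), fun i => m (T.equivFin.symm i), ?_, ?_, ?_⟩
  · intro i; exact hm _ (T.equivFin.symm i).2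
  · intro n hn
    obtain ⟨i, hi, hni⟩ := Set.mem_iUnion₂.1 (hcov hn)
    refine Set.mem_iUnion.2 ⟨T.equivFin ⟨i, hi⟩, ?_⟩
    simpa using hni
  · rw [← Finset.sum_attach T (fun i => (1 : ℝ) / (m i))]
    exact (Equiv.sum_comp T.equivFin.symm (fun a => (1 : ℝ) / (m a.1))).symm

lemma one_le_buck_add (S : Set ℕ) : 1 ≤ buckDensity S + buckDensity Sᶜ := by
  rw [buckDensity, buckDensity, ← sub_le_iff_le_add]
  apply le_csInf (buck_nonempty S)
  rintro x ⟨k, r, m, hm, hcov, rfl⟩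
  rw [sub_le_comm]
  apply le_csInf (buck_nonempty Sᶜ)
  rintro y ⟨k', r', m', hm', hcov', rfl⟩
  rw [sub_le_iff_le_add]
  have key := one_le_cover_sum (Fin.append r r') (Fin.append m m') ?_ ?_
  · calc (1:ℝ) ≤ ∑ i, (1:ℝ) / (Fin.append m m' i) := key
    _ = _ := by
      rw [Fin.sum_univ_add]
      simp [Fin.append_left, Fin.append_right, add_comm]
  · intro i
    refine Fin.addCases (fun j => ?_) (fun j => ?_) i
    · simpa [Fin.append_left] using hm j
    · simpa [Fin.append_right] using hm' j
  · intro n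
    by_cases hn : n ∈ S
    · obtain ⟨i, hi⟩ := Set.mem_iUnion.1 (hcov hn)
      exact ⟨Fin.castAdd k' i, by simpa [Fin.append_left] using hi⟩
    · obtain ⟨i, hi⟩ := Set.mem_iUnion.1 (hcov' hn)
      exact ⟨Fin.natAdd k i, by simpa [Fin.append_right] using hi⟩

lemma exists_residue {p : ℕ} (hp : p.Prime) {n : ℕ} (hn : n ≠ 0) :
    ∃ t ∈ Finset.Ico 1 p,
      n ≡ t * p ^ padicValNat p n [MOD p ^ (padicValNat p n + 1)] := by
  haveI : Fact p.Prime := ⟨hp⟩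
  set j := padicValNat p n with hj
  obtain ⟨u, hu⟩ : p ^ j ∣ n := pow_padicValNat_dvd
  have hnd : ¬ p ∣ u := by
    rintro ⟨v, hv⟩
    have hne : n = p ^ (j + 1) * v := by rw [hu, hv, pow_succ]; ring
    exact pow_succ_padicValNat_not_dvd hn ⟨v, hne⟩
  have ht1 : 1 ≤ u % p := by
    rcases Nat.eq_zero_or_pos (u % p) with h | h
    · exact absurd (Nat.dvd_of_mod_eq_zero h) hnd
    · exact h
  have htp : u % p < p := Nat.mod_lt u hp.pos
  refine ⟨u % p, Finset.mem_Ico.2 ⟨ht1, htp⟩, ?_⟩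
  show n % p ^ (j + 1) = (u % p * p ^ j) % p ^ (j + 1)
  have h1 : n % p ^ (j + 1) = p ^ j * (u % p) := by
    rw [hu, pow_succ, Nat.mul_mod_mul_left]
  have h2 : u % p * p ^ j < p ^ (j + 1) := by
    rw [pow_succ]
    calc u % p * p ^ j < p * p ^ j := by
          exact (Nat.mul_lt_mul_right (pow_pos hp.pos j)).2 htp
    _ = p ^ j * p := by ring
  rw [h1, Nat.mod_eq_of_lt h2, mul_comm]

lemma cover_bound {p : ℕ} (hp : p.Prime) (S : Set ℕ) (J : Finset ℕ) (B : ℕ)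
    (hcov : ∀ n ∈ S, p ^ B ∣ n ∨ (n ≠ 0 ∧ padicValNat p n ∈ J)) :
    buckDensity S ≤ 1 / (p : ℝ) ^ B + ∑ j ∈ J, ((p : ℝ) - 1) / (p : ℝ) ^ (j + 1) := by
  classical
  set T : Finset (Option (ℕ × ℕ)) :=
    insert none ((J ×ˢ Finset.Ico 1 p).map Function.Embedding.some) with hT
  set r : Option (ℕ × ℕ) → ℕ := fun o => o.elim 0 (fun q => q.2 * p ^ q.1) with hr
  set m : Option (ℕ × ℕ) → ℕ := fun o => o.elim (p ^ B) (fun q => p ^ (q.1 + 1)) with hm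
  have hnone : none ∉ (J ×ˢ Finset.Ico 1 p).map (Function.Embedding.some (α := ℕ × ℕ)) := by
    simp
  have h1 : ∀ i ∈ T, 0 < m i := by
    rintro (_ | ⟨j, t⟩) _
    · exact pow_pos hp.pos B
    · exact pow_pos hp.pos (j + 1)
  have h2 : S ⊆ ⋃ i ∈ T, {n : ℕ | n ≡ r i [MOD m i]} := by
    intro n hn
    rcases hcov n hn with h | ⟨hn0, hj⟩
    · refine Set.mem_iUnion₂.2 ⟨none, Finset.mem_insert_self _ _, ?_⟩
      show n ≡ 0 [MOD p ^ B]
      exact (Nat.modEq_zero_iff_dvd).2 h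
    · obtain ⟨t, ht, hmod⟩ := exists_residue hp hn0
      refine Set.mem_iUnion₂.2 ⟨some (padicValNat p n, t), ?_, hmod⟩
      exact Finset.mem_insert_of_mem (Finset.mem_map_of_mem _
        (Finset.mem_product.2 ⟨hj, ht⟩))
  have hsum : ∑ i ∈ T, (1 : ℝ) / (m i)
      = 1 / (p : ℝ) ^ B + ∑ j ∈ J, ((p : ℝ) - 1) / (p : ℝ) ^ (j + 1) := by
    rw [hT, Finset.sum_insert hnone, Finset.sum_map, Finset.sum_product]
    simp only [hm, Option.elim, Function.Embedding.some_apply, Finset.sum_const,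
      Nat.card_Ico, nsmul_eq_mul]
    push_cast [Nat.cast_sub hp.one_lt.le]
    simp [mul_one_div, div_eq_mul_inv]
  exact (buckDensity_le (S := S) T r m h1 h2).trans_eq hsum

lemma geo_sum {p : ℕ} (hp : p.Prime) (N : ℕ) :
    ∑ j ∈ Finset.range N, ((p : ℝ) - 1) / (p : ℝ) ^ (j + 1) = 1 - 1 / (p : ℝ) ^ N := by
  have hp0 : (p : ℝ) ≠ 0 := by exact_mod_cast hp.pos.ne'
  induction N with
  | zero => simp
  | succ N ih =>
    rw [Finset.sum_range_succ, ih]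
    field_simp
    ring

theorem stmt_4 (p : ℕ) (hp : p.Prime) (e : ℕ → ℕ) (he : StrictMono e)
    (hpos : ∀ n, 0 < e n) :
    BuckMeasurable {n : ℕ | padicValNat p n ∈ Set.range e} ∧
      buckDensity {n : ℕ | padicValNat p n ∈ Set.range e} =
        (1 - 1 / (p : ℝ)) * ∑' n, (1 : ℝ) / (p : ℝ) ^ (e n) := by
  haveI : Fact p.Prime := ⟨hp⟩
  set S := {n : ℕ | padicValNat p n ∈ Set.range e} with hSdef
  have hp0 : (0 : ℝ) < p := by exact_mod_cast hp.pos
  have hp1 : (1 : ℝ) < p := by exact_mod_cast hp.one_lt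
  set c : ℕ → ℝ := fun K => ∑ k ∈ Finset.range K, ((p : ℝ) - 1) / (p : ℝ) ^ (e k + 1) with hc
  have hsummable : Summable (fun n => (1 : ℝ) / (p : ℝ) ^ (e n)) := by
    apply Summable.of_nonneg_of_le (fun n => by positivity) (fun n => ?_)
      (summable_geometric_of_lt_one (r := 1 / (p : ℝ)) (by positivity)
        (by rw [div_lt_one hp0]; exact hp1))
    rw [← one_div_pow]
    exact pow_le_pow_of_le_one (by positivity)
      (by rw [div_le_one hp0]; exact hp1.le) he.le_apply
  set σ : ℝ := (1 - 1 / (p : ℝ)) * ∑' n, (1 : ℝ) / (p : ℝ) ^ (e n) with hσ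
  have hctend : Filter.Tendsto c Filter.atTop (nhds σ) := by
    have h := (hsummable.hasSum.tendsto_sum_nat).const_mul (1 - 1 / (p : ℝ))
    convert h using 2 with K
    rw [Finset.mul_sum]
    refine Finset.sum_congr rfl fun k _ => ?_
    have hpne : (p : ℝ) ≠ 0 := hp0.ne'
    rw [pow_succ]
    field_simp
  have htail : Filter.Tendsto (fun K => (1 : ℝ) / (p : ℝ) ^ (e K)) Filter.atTop (nhds 0) := by
    apply squeeze_zero (fun K => by positivity) (fun K => ?_)
      (tendsto_pow_atTop_nhds_zero_of_lt_one (r := 1 / (p : ℝ)) (by positivity)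
        (by rw [div_lt_one hp0]; exact hp1))
    rw [← one_div_pow]
    exact pow_le_pow_of_le_one (by positivity)
      (by rw [div_le_one hp0]; exact hp1.le) he.le_apply
  have hinj : ∀ K, ∀ a ∈ Finset.range K, ∀ b ∈ Finset.range K, e a = e b → a = b :=
    fun K a _ b _ h => he.injective h
  have hS_le : ∀ K, buckDensity S ≤ 1 / (p : ℝ) ^ (e K) + c K := by
    intro K
    refine (cover_bound hp S (Finset.image e (Finset.range K)) (e K) ?_).trans_eq ?_
    · intro n hn
      obtain ⟨k, hk⟩ := hn
      have hn0 : n ≠ 0 := by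
        rintro rfl
        rw [padicValNat.zero] at hk
        exact (hpos k).ne' hk
      by_cases hkK : k < K
      · exact Or.inr ⟨hn0, Finset.mem_image.2 ⟨k, Finset.mem_range.2 hkK, hk⟩⟩
      · refine Or.inl ?_
        have hle : e K ≤ e k := he.monotone (not_lt.1 hkK)
        calc p ^ e K ∣ p ^ padicValNat p n := pow_dvd_pow p (hk ▸ hle)
        _ ∣ n := pow_padicValNat_dvd
    · rw [Finset.sum_image (hinj K)]
  have hC_le : ∀ K, buckDensity Sᶜ ≤ 1 - c (K + 1) := by
    intro K
    set M := e K with hM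
    have hsub : Finset.image e (Finset.range (K + 1)) ⊆ Finset.range (M + 1) := by
      intro j hj
      obtain ⟨k, hk, rfl⟩ := Finset.mem_image.1 hj
      rw [Finset.mem_range] at hk ⊢
      exact Nat.lt_succ_of_le (he.monotone (Nat.lt_succ_iff.1 hk))
    refine (cover_bound hp Sᶜ
      (Finset.range (M + 1) \ Finset.image e (Finset.range (K + 1))) (M + 1) ?_).trans_eq ?_
    · intro n hn
      by_cases hd : p ^ (M + 1) ∣ n
      · exact Or.inl hd
      · refine Or.inr ⟨fun h => hd (h ▸ dvd_zero _), ?_⟩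
        have hv : padicValNat p n < M + 1 := by
          by_contra h
          exact hd ((pow_dvd_pow p (not_lt.1 h)).trans pow_padicValNat_dvd)
        refine Finset.mem_sdiff.2 ⟨Finset.mem_range.2 hv, fun hmem => ?_⟩
        obtain ⟨k, _, hk⟩ := Finset.mem_image.1 hmem
        exact hn ⟨k, hk⟩
    · rw [Finset.sum_sdiff_eq_sub hsub, geo_sum hp (M + 1), Finset.sum_image (hinj (K + 1))]
      ring
  have hS : buckDensity S ≤ σ := by
    have hlim : Filter.Tendsto (fun K => 1 / (p : ℝ) ^ (e K) + c K) Filter.atTop (nhds σ) := by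
      simpa using htail.add hctend
    exact ge_of_tendsto' hlim hS_le
  have hC : buckDensity Sᶜ ≤ 1 - σ := by
    have hlim : Filter.Tendsto (fun K => 1 - c (K + 1)) Filter.atTop (nhds (1 - σ)) :=
      tendsto_const_nhds.sub (hctend.comp (Filter.tendsto_add_atTop_nat 1))
    exact ge_of_tendsto' hlim hC_le
  have hge := one_le_buck_add S
  refine ⟨?_, by linarith⟩
  show buckDensity S + buckDensity Sᶜ = 1
  linarith
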